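/- In the high-transfer-price setting with τ₁ > 0, let Δp*(t) := ((t−τ₁)/((1−exp(−λ))·(1+z)·t·(1+1/γ)))^γ · (p^∨ − p̄) for t ∈ (τ₁,1]. Then the t-elasticity of the optimal price gap satisfies (dΔp*/dt)·(t/Δp*(t)) = γ·(t − (t−τ₁))/(t−τ₁) = γ·τ₁/(t−τ₁); in particular this elasticity equals 1 if and only if γ·(t − (t−τ₁)) = t−τ₁. -/

import Mathlib

open Real Set Filter Topology

/-- In the high-transfer-price setting with `τ₁ > 0`, the `t`-elasticity of the optimal
price gap `Δp*(t)` equals `γ·(t−(t−τ₁))/(t−τ₁) = γ·τ₁/(t−τ₁)`, and it equals `1` iff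
`γ·(t−(t−τ₁)) = t−τ₁`. -/
theorem stmt6 (τ₁ lam z γ pbar pvee : ℝ)
    (hτ₁ : τ₁ ∈ Set.Ioo (0 : ℝ) 1)
    (hlam : 0 < lam) (hz : 0 < z) (hγ : γ ∈ Set.Ioc (0 : ℝ) 1) (hp : pbar < pvee)
    (Δp : ℝ → ℝ)
    (hΔp : Δp = fun t =>
      ((t - τ₁) / ((1 - Real.exp (-lam)) * (1 + z) * t * (1 + 1 / γ))) ^ γ * (pvee - pbar)) :
    ∀ t ∈ Set.Ioc τ₁ 1,
      deriv Δp t * (t / Δp t) = γ * ((t - (t - τ₁)) / (t - τ₁)) ∧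
      γ * ((t - (t - τ₁)) / (t - τ₁)) = γ * τ₁ / (t - τ₁) ∧
      (deriv Δp t * (t / Δp t) = 1 ↔ γ * (t - (t - τ₁)) = t - τ₁) := by
  obtain ⟨hτ0, hτ1⟩ := hτ₁
  obtain ⟨hγ0, hγ1⟩ := hγ
  intro t ht
  obtain ⟨htτ, ht1⟩ := ht
  have ht0 : 0 < t := lt_trans hτ0 htτ
  have htsub : 0 < t - τ₁ := sub_pos.mpr htτ
  -- constants
  set c : ℝ := (1 - Real.exp (-lam)) * (1 + z) * (1 + 1 / γ) with hc
  have he : Real.exp (-lam) < 1 := Real.exp_lt_one_iff.mpr (by linarith)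
  have hc0 : 0 < c := by
    apply mul_pos (mul_pos (by linarith) (by linarith))
    have : 0 < 1 / γ := by positivity
    linarith
  have hC0 : 0 < pvee - pbar := sub_pos.mpr hp
  -- rewrite Δp
  have hΔp' : Δp = fun s => ((s - τ₁) / (c * s)) ^ γ * (pvee - pbar) := by
    rw [hΔp]; funext s; congr 1; congr 1; rw [hc]; ring
  set f : ℝ → ℝ := fun s => (s - τ₁) / (c * s) with hf
  have hft0 : 0 < f t := div_pos htsub (mul_pos hc0 ht0)
  have hden : c * t ≠ 0 := (mul_pos hc0 ht0).ne'
  -- derivative of f at t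
  have hdf : HasDerivAt f ((1 * (c * t) - (t - τ₁) * c) / (c * t) ^ 2) t := by
    have h := ((hasDerivAt_id t).sub_const τ₁).div
      ((hasDerivAt_id t).const_mul c) hden
    simp only [id_eq, mul_one] at h
    exact h
  have hdΔ : HasDerivAt Δp
      (((1 * (c * t) - (t - τ₁) * c) / (c * t) ^ 2) * γ * f t ^ (γ - 1) * (pvee - pbar)) t := by
    rw [hΔp']
    exact (hdf.rpow_const (Or.inl hft0.ne')).mul_const _
  have hderiv : deriv Δp t =
      ((1 * (c * t) - (t - τ₁) * c) / (c * t) ^ 2) * γ * f t ^ (γ - 1) * (pvee - pbar) :=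
    hdΔ.deriv
  have hΔpt : Δp t = f t ^ γ * (pvee - pbar) := by rw [hΔp']
  have hrpow : f t ^ (γ - 1) = f t ^ γ / f t := by
    rw [Real.rpow_sub hft0, Real.rpow_one]
  have hfγ0 : 0 < f t ^ γ := Real.rpow_pos_of_pos hft0 γ
  have key : deriv Δp t * (t / Δp t) = γ * τ₁ / (t - τ₁) := by
    rw [hderiv, hΔpt, hrpow]
    have hf_eq : f t = (t - τ₁) / (c * t) := rfl
    set P := f t ^ γ with hP
    rw [hf_eq]
    field_simp
    ring
  have hsub : t - (t - τ₁) = τ₁ := by ring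
  refine ⟨?_, ?_, ?_⟩
  · rw [key, hsub, mul_div_assoc]
  · rw [hsub, mul_div_assoc]
  · rw [key, hsub, div_eq_one_iff_eq htsub.ne']
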